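/- Let A = ℤ_4[X]/⟨X^2+2X⟩ and let C ⊆ A^2 be the A-submodule generated by (X,0), (2,X), (0,2). Then the dual code C^⊥ = {e ∈ A^2 : e_1c_1 + e_2c_2 = 0 for all c ∈ C} is generated as an A-module by the single element (X+2, 2). -/

import Mathlib

/-- The dual code of `C ⊆ A^l` with respect to the standard bilinear form. -/
def dualCode {A : Type*} [CommRing A] {l : ℕ} (C : Submodule A (Fin l → A)) :
    Submodule A (Fin l → A) where
  carrier := {e | ∀ c ∈ C, ∑ i, e i * c i = 0}
  zero_mem' := by intro c hc; simp
  add_mem' := by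
    intro a b ha hb c hc
    have h1 := ha c hc
    have h2 := hb c hc
    simp only [Pi.add_apply, add_mul, Finset.sum_add_distrib, h1, h2, add_zero]
  smul_mem' := by
    intro r e he c hc
    have h := he c hc
    simp only [Pi.smul_apply, smul_eq_mul, mul_assoc, ← Finset.mul_sum, h, mul_zero]

open Polynomial

private lemma monic_g : (X ^ 2 + 2 * X : Polynomial (ZMod 4)).Monic := by monicity!

private lemma degree_g : degree (X ^ 2 + 2 * X : Polynomial (ZMod 4)) = 2 := by
  compute_degree!

private lemma half_exists : ∀ d : ZMod 4, 2 * d = 0 → ∃ t, 2 * t = d := by decide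

/-- Representation lemma: every element of the quotient is `a + b X`. -/
private lemma rep (I : Ideal (Polynomial (ZMod 4)))
    (hI : I = Ideal.span {X ^ 2 + 2 * X}) (z : Polynomial (ZMod 4) ⧸ I) :
    ∃ a b : ZMod 4, z = Ideal.Quotient.mk I (C a) + Ideal.Quotient.mk I (C b) *
      Ideal.Quotient.mk I X := by
  haveI : Nontrivial (ZMod 4) := ⟨0, 1, by decide⟩
  obtain ⟨p, rfl⟩ := Ideal.Quotient.mk_surjective z
  refine ⟨(p %ₘ (X ^ 2 + 2 * X)).coeff 0, (p %ₘ (X ^ 2 + 2 * X)).coeff 1, ?_⟩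
  have hdeg : (p %ₘ (X ^ 2 + 2 * X)).degree ≤ 1 := by
    have h := degree_modByMonic_lt p monic_g
    rw [degree_g] at h
    exact Order.lt_succ_iff.mp (by exact_mod_cast h)
  have hrep : p %ₘ (X ^ 2 + 2 * X) = C ((p %ₘ (X ^ 2 + 2 * X)).coeff 1) * X +
      C ((p %ₘ (X ^ 2 + 2 * X)).coeff 0) :=
    eq_X_add_C_of_degree_le_one hdeg
  have hmk : Ideal.Quotient.mk I p = Ideal.Quotient.mk I (p %ₘ (X ^ 2 + 2 * X)) := by
    rw [Ideal.Quotient.mk_eq_mk_iff_sub_mem]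
    have hmd := modByMonic_add_div p (X ^ 2 + 2 * X)
    have heq : p - p %ₘ (X ^ 2 + 2 * X) = (X ^ 2 + 2 * X) * (p /ₘ (X ^ 2 + 2 * X)) := by
      linear_combination -hmd
    rw [heq, hI]
    exact Ideal.mem_span_singleton.mpr ⟨_, rfl⟩
  rw [hmk, ← map_mul, ← map_add]
  exact congrArg (Ideal.Quotient.mk I) (by linear_combination hrep)

/-- Key lemma: `a + b X = 0` in the quotient iff `a = b = 0`. -/
private lemma key (I : Ideal (Polynomial (ZMod 4)))
    (hI : I = Ideal.span {X ^ 2 + 2 * X}) (a b : ZMod 4)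
    (h : Ideal.Quotient.mk I (C a) + Ideal.Quotient.mk I (C b) *
      Ideal.Quotient.mk I X = 0) : a = 0 ∧ b = 0 := by
  have h' : Ideal.Quotient.mk I (C a + C b * X) = 0 := by
    rw [map_add, map_mul]; exact h
  rw [Ideal.Quotient.eq_zero_iff_mem, hI, Ideal.mem_span_singleton] at h'
  obtain ⟨q, hq⟩ := h'
  rcases eq_or_ne q 0 with rfl | hq0
  · rw [mul_zero] at hq
    have ha := congrArg (fun p => Polynomial.coeff p 0) hq
    have hb := congrArg (fun p => Polynomial.coeff p 1) hq
    simp [coeff_X, coeff_C] at ha hb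
    exact ⟨ha, hb⟩
  · exfalso
    have hd : ((X ^ 2 + 2 * X : Polynomial (ZMod 4)) * q).degree = q.degree + 2 := by
      rw [mul_comm, monic_g.degree_mul, degree_g]
    have hle : (C a + C b * X : Polynomial (ZMod 4)).degree ≤ 1 :=
      (degree_add_le _ _).trans (by
        simp only [sup_le_iff]
        refine ⟨degree_C_le.trans (by norm_num), ?_⟩
        exact (degree_mul_le _ _).trans (by simpa using add_le_add degree_C_le degree_X_le))
    rw [hq, hd] at hle
    have h2 : (2 : WithBot ℕ) ≤ q.degree + 2 := by
      rw [q.degree_eq_natDegree hq0]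
      exact_mod_cast le_add_of_nonneg_left (by exact_mod_cast Nat.zero_le _)
    have : (2 : WithBot ℕ) ≤ 1 := h2.trans hle
    norm_num at this

set_option maxHeartbeats 1000000 in
/-- Let `A = ℤ_4[X]/⟨X²+2X⟩` and `C ⊆ A²` the `A`-submodule generated by
`(X,0), (2,X), (0,2)`. Then `C^⊥` is generated by the single element `(X+2, 2)`. -/
theorem stmt17 (I : Ideal (Polynomial (ZMod 4)))
    (hI : I = Ideal.span {Polynomial.X ^ 2 + 2 * Polynomial.X}) :
    dualCode (Submodule.span (Polynomial (ZMod 4) ⧸ I)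
        {![Ideal.Quotient.mk I Polynomial.X, 0],
          ![2, Ideal.Quotient.mk I Polynomial.X],
          ![0, 2]})
      = Submodule.span (Polynomial (ZMod 4) ⧸ I)
          {![Ideal.Quotient.mk I Polynomial.X + 2, 2]} := by
  set A := Polynomial (ZMod 4) ⧸ I with hA
  set m := Ideal.Quotient.mk I with hm
  set x : A := m X with hxdef
  set κ := m.comp (C : ZMod 4 →+* Polynomial (ZMod 4)) with hκ
  have hx : x ^ 2 + 2 * x = 0 := by
    have h0 : m (X ^ 2 + 2 * X) = 0 := by
      rw [Ideal.Quotient.eq_zero_iff_mem, hI]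
      exact Ideal.subset_span rfl
    rw [map_add, map_mul, map_pow, map_ofNat] at h0
    exact h0
  have h4 : (4 : A) = 0 := by
    rw [← map_ofNat κ 4, show (4 : ZMod 4) = 0 by decide, map_zero]
  apply le_antisymm
  · -- hard direction : dual ⊆ span {(X+2, 2)}
    intro e he
    have h1 : e 0 * x + e 1 * 0 = 0 := by
      have h := he ![x, 0] (Submodule.subset_span (Set.mem_insert _ _))
      simp only [Fin.sum_univ_two, Matrix.cons_val_zero, Matrix.cons_val_one,
        Matrix.head_cons] at h
      exact h
    have h2 : e 0 * 2 + e 1 * x = 0 := by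
      have h := he ![2, x]
        (Submodule.subset_span (Set.mem_insert_of_mem _ (Set.mem_insert _ _)))
      simp only [Fin.sum_univ_two, Matrix.cons_val_zero, Matrix.cons_val_one,
        Matrix.head_cons] at h
      exact h
    have h3 : e 0 * 0 + e 1 * 2 = 0 := by
      have h := he ![0, 2]
        (Submodule.subset_span (Set.mem_insert_of_mem _ (Set.mem_insert_of_mem _ rfl)))
      simp only [Fin.sum_univ_two, Matrix.cons_val_zero, Matrix.cons_val_one,
        Matrix.head_cons] at h
      exact h
    obtain ⟨a, b, he0⟩ := rep I hI (e 0)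
    obtain ⟨c, d, he1⟩ := rep I hI (e 1)
    have he0' : e 0 = κ a + κ b * x := he0
    have he1' : e 1 = κ c + κ d * x := he1
    clear he0 he1
    rw [he0'] at h1 h2
    rw [he1'] at h2 h3
    have hab : a + 2 * b = 0 := by
      refine (key I hI 0 (a + 2 * b) ?_).2
      show κ 0 + κ (a + 2 * b) * x = 0
      rw [map_zero, map_add, map_mul, map_ofNat]
      linear_combination h1 - κ b * hx + κ b * x * h4
    have hcd2 : 2 * c = 0 ∧ 2 * d = 0 := by
      apply key I hI (2 * c) (2 * d)
      show κ (2 * c) + κ (2 * d) * x = 0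
      rw [map_mul, map_mul, map_ofNat]
      linear_combination h3
    obtain ⟨hc2, hd2⟩ := hcd2
    have hbc : 2 * b + c + 2 * d = 0 := by
      refine (key I hI (2 * a) (2 * b + c + 2 * d) ?_).2
      show κ (2 * a) + κ (2 * b + c + 2 * d) * x = 0
      rw [map_mul, map_ofNat, map_add, map_add, map_mul, map_mul, map_ofNat]
      linear_combination h2 - κ d * hx + κ d * x * h4
    obtain ⟨t, ht⟩ := half_exists d hd2
    rw [Submodule.mem_span_singleton]
    refine ⟨κ b + κ t * x, ?_⟩
    have hab' : κ a + 2 * κ b = 0 := by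
      have h := congrArg κ hab
      rwa [map_add, map_mul, map_ofNat, map_zero] at h
    have hbc' : 2 * κ b + κ c + 2 * κ d = 0 := by
      have h := congrArg κ hbc
      rwa [map_add, map_add, map_mul, map_mul, map_ofNat, map_zero] at h
    have hd2' : 2 * κ d = 0 := by
      have h := congrArg κ hd2
      rwa [map_mul, map_ofNat, map_zero] at h
    have ht' : 2 * κ t = κ d := by
      have h := congrArg κ ht
      rwa [map_mul, map_ofNat] at h
    funext i
    fin_cases i
    · show (κ b + κ t * x) * (x + 2) = e 0
      rw [he0']
      linear_combination κ t * hx - hab' + κ b * h4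
    · show (κ b + κ t * x) * 2 = e 1
      rw [he1']
      linear_combination x * ht' + κ b * h4 + hd2' - hbc'
  · -- easy direction
    rw [Submodule.span_le]
    rintro v hv
    simp only [Set.mem_singleton_iff] at hv
    subst hv
    intro c hc
    induction hc using Submodule.span_induction with
    | mem c hmem =>
      simp only [Set.mem_insert_iff, Set.mem_singleton_iff] at hmem
      rcases hmem with rfl | rfl | rfl
      · simp only [Fin.sum_univ_two, Matrix.cons_val_zero, Matrix.cons_val_one, Matrix.head_cons]
        linear_combination hx
      · simp only [Fin.sum_univ_two, Matrix.cons_val_zero, Matrix.cons_val_one, Matrix.head_cons]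
        linear_combination x * h4 + h4
      · simp only [Fin.sum_univ_two, Matrix.cons_val_zero, Matrix.cons_val_one, Matrix.head_cons]
        linear_combination h4
    | zero => simp
    | add u v hu hv ihu ihv =>
      simp only [Fin.sum_univ_two, Pi.add_apply] at ihu ihv ⊢
      linear_combination ihu + ihv
    | smul r u hu ihu =>
      simp only [Fin.sum_univ_two, Pi.smul_apply, smul_eq_mul] at ihu ⊢
      linear_combination r * ihu
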